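/- Let n ≥ 2 and let Γ be a finite index subgroup of SL_n(ℤ). Let F : ℝⁿ → ℝⁿ be a bijection such that F and F⁻¹ are C¹, and such that F(x+m) − F(x) ∈ ℤⁿ for all x ∈ ℝⁿ and m ∈ ℤⁿ (so F descends to a C¹ diffeomorphism of the torus ℝⁿ/ℤⁿ). Suppose that for every x ∈ ℝⁿ there exist γ ∈ Γ and m ∈ ℤⁿ with F(x) = γx + m (i.e., the induced torus map preserves each Γ-orbit). Then there exist a single γ ∈ Γ and a single m ∈ ℤⁿ such that F(x) = γx + m for all x ∈ ℝⁿ. -/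

import Mathlib

/-- The linear action of an integer matrix on `ℝⁿ`. -/
def intMatAct {n : ℕ} (γ : Matrix (Fin n) (Fin n) ℤ) (x : Fin n → ℝ) : Fin n → ℝ :=
  (γ.map (Int.cast : ℤ → ℝ)).mulVec x

lemma aux_int_const {E : Type*} [TopologicalSpace E] [PreconnectedSpace E] (g : E → ℝ)
    (hg : Continuous g) (hint : ∀ x, ∃ k : ℤ, g x = k) (x y : E) : g x = g y := by
  have hclopen : IsClopen {z | g z = g y} := by
    constructor
    · exact isClosed_eq hg continuous_const
    · rw [isOpen_iff_mem_nhds]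
      intro z hz
      have hmem : g ⁻¹' Metric.ball (g z) 1 ∈ nhds z :=
        hg.continuousAt.preimage_mem_nhds (Metric.ball_mem_nhds _ one_pos)
      filter_upwards [hmem] with w hw
      obtain ⟨kw, hkw⟩ := hint w
      obtain ⟨kz, hkz⟩ := hint z
      have h1 : |(kw : ℝ) - (kz : ℝ)| < 1 := by
        simpa [Real.dist_eq, hkw, hkz] using hw
      have h2 : |kw - kz| < 1 := by exact_mod_cast (by exact_mod_cast h1 : (|kw - kz| : ℝ) < 1)
      have h2' := abs_lt.mp h2
      have h3 : kw = kz := by omega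
      show g w = g y
      rw [hkw, h3, ← hkz, hz]
  have huniv := hclopen.eq_univ ⟨y, rfl⟩
  exact (huniv ▸ Set.mem_univ x : x ∈ {z | g z = g y})

/-- The continuous linear map attached to an integer matrix. -/
noncomputable def intMatCLM {n : ℕ} (M : Matrix (Fin n) (Fin n) ℤ) :
    (Fin n → ℝ) →L[ℝ] (Fin n → ℝ) :=
  LinearMap.toContinuousLinearMap ((M.map (Int.cast : ℤ → ℝ)).mulVecLin)

lemma intMatCLM_apply {n : ℕ} (M : Matrix (Fin n) (Fin n) ℤ) (x : Fin n → ℝ) :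
    intMatCLM M x = intMatAct M x := rfl

theorem stmt1 (n : ℕ) (hn : 2 ≤ n)
    (Γ : Subgroup (Matrix.SpecialLinearGroup (Fin n) ℤ)) (hΓ : Γ.FiniteIndex)
    (F : (Fin n → ℝ) ≃ (Fin n → ℝ))
    (hF : ContDiff ℝ 1 F) (hFsymm : ContDiff ℝ 1 F.symm)
    (hper : ∀ (x : Fin n → ℝ) (m : Fin n → ℤ),
      ∃ k : Fin n → ℤ, F (x + fun i => (m i : ℝ)) = F x + fun i => (k i : ℝ))
    (horb : ∀ x : Fin n → ℝ, ∃ γ ∈ Γ, ∃ m : Fin n → ℤ,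
      F x = intMatAct (γ : Matrix (Fin n) (Fin n) ℤ) x + fun i => (m i : ℝ)) :
    ∃ γ ∈ Γ, ∃ m : Fin n → ℤ, ∀ x : Fin n → ℝ,
      F x = intMatAct (γ : Matrix (Fin n) (Fin n) ℤ) x + fun i => (m i : ℝ) := by
  classical
  haveI : Countable (Matrix (Fin n) (Fin n) ℤ) := by unfold Matrix; infer_instance
  haveI : Countable (Matrix.SpecialLinearGroup (Fin n) ℤ) := by
    unfold Matrix.SpecialLinearGroup; infer_instance
  haveI : Countable ↥Γ := Subtype.countable
  -- the closed pieces
  set S : (↥Γ × (Fin n → ℤ)) → Set (Fin n → ℝ) := fun p =>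
    {x | F x = intMatAct ((p.1 : Matrix.SpecialLinearGroup (Fin n) ℤ) :
        Matrix (Fin n) (Fin n) ℤ) x + fun i => ((p.2 i : ℝ))} with hSdef
  have hSclosed : ∀ p, IsClosed (S p) := by
    intro p
    exact isClosed_eq hF.continuous ((intMatCLM _).continuous.add continuous_const)
  have hScover : ⋃ p, S p = Set.univ := by
    ext x
    simp only [Set.mem_iUnion, Set.mem_univ, iff_true]
    obtain ⟨γ, hγ, m, hm⟩ := horb x
    exact ⟨⟨⟨γ, hγ⟩, m⟩, hm⟩
  have hUdense : Dense (⋃ p, interior (S p)) :=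
    dense_iUnion_interior_of_closed hSclosed hScover
  -- derivative on the interiors
  have hDint : ∀ p, ∀ x ∈ interior (S p), fderiv ℝ F x =
      intMatCLM ((p.1 : Matrix.SpecialLinearGroup (Fin n) ℤ) : Matrix (Fin n) (Fin n) ℤ) := by
    intro p x hx
    have hev : (F : (Fin n → ℝ) → (Fin n → ℝ)) =ᶠ[nhds x]
        fun y => intMatAct ((p.1 : Matrix.SpecialLinearGroup (Fin n) ℤ) :
          Matrix (Fin n) (Fin n) ℤ) y + fun i => ((p.2 i : ℝ)) := by
      filter_upwards [isOpen_interior.mem_nhds hx] with y hy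
      exact (interior_subset hy : y ∈ S p)
    rw [hev.fderiv_eq, fderiv_add_const]
    have heq : intMatAct ((p.1 : Matrix.SpecialLinearGroup (Fin n) ℤ) :
        Matrix (Fin n) (Fin n) ℤ) = ⇑(intMatCLM ((p.1 : Matrix.SpecialLinearGroup (Fin n) ℤ) :
        Matrix (Fin n) (Fin n) ℤ)) := by
      funext y; exact (intMatCLM_apply _ y).symm
    rw [heq]
    exact (intMatCLM _).fderiv
  -- entries of the derivative are integers everywhere
  have hcontD : Continuous (fderiv ℝ F) := hF.continuous_fderiv one_ne_zero
  have hentry : ∀ (i j : Fin n) (x : Fin n → ℝ),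
      ∃ k : ℤ, fderiv ℝ F x (Pi.single j 1) i = (k : ℝ) := by
    intro i j
    have hcont : Continuous fun x => fderiv ℝ F x (Pi.single j 1) i :=
      (continuous_apply i).comp (hcontD.clm_apply continuous_const)
    have hC : IsClosed ((fun x => fderiv ℝ F x (Pi.single j 1) i) ⁻¹'
        (Set.range (Int.cast : ℤ → ℝ))) :=
      IsClosed.preimage hcont Int.isClosedEmbedding_coe_real.isClosed_range
    have hsub : (⋃ p, interior (S p)) ⊆ (fun x => fderiv ℝ F x (Pi.single j 1) i) ⁻¹'
        (Set.range (Int.cast : ℤ → ℝ)) := by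
      rintro x hx
      obtain ⟨p, hp⟩ := Set.mem_iUnion.mp hx
      have hD := hDint p x hp
      refine ⟨((p.1 : Matrix.SpecialLinearGroup (Fin n) ℤ) :
        Matrix (Fin n) (Fin n) ℤ) i j, ?_⟩
      show _ = fderiv ℝ F x (Pi.single j 1) i
      rw [hD, intMatCLM_apply]
      show _ = ((((p.1 : Matrix.SpecialLinearGroup (Fin n) ℤ) :
        Matrix (Fin n) (Fin n) ℤ).map (Int.cast : ℤ → ℝ)).mulVec (Pi.single j 1)) i
      rw [Matrix.mulVec_single]
      simp [Matrix.map_apply]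
    have huniv : (fun x => fderiv ℝ F x (Pi.single j 1) i) ⁻¹'
        (Set.range (Int.cast : ℤ → ℝ)) = Set.univ := by
      apply Set.eq_univ_of_univ_subset
      calc (Set.univ : Set (Fin n → ℝ)) = closure (⋃ p, interior (S p)) :=
            hUdense.closure_eq.symm
        _ ⊆ _ := hC.closure_subset_iff.mpr hsub
    intro x
    obtain ⟨k, hk⟩ := (huniv ▸ Set.mem_univ x :
      x ∈ (fun x => fderiv ℝ F x (Pi.single j 1) i) ⁻¹' (Set.range (Int.cast : ℤ → ℝ)))
    exact ⟨k, hk.symm⟩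
  -- the derivative is globally constant
  have hDconst : ∀ x y : Fin n → ℝ, fderiv ℝ F x = fderiv ℝ F y := by
    intro x y
    apply ContinuousLinearMap.coe_injective
    apply LinearMap.pi_ext
    intro j c
    have hsingle : (Pi.single j c : Fin n → ℝ) = c • (Pi.single j 1 : Fin n → ℝ) := by
      funext i
      by_cases h : i = j <;> simp [Pi.single_apply, h]
    rw [hsingle]
    show fderiv ℝ F x (c • (Pi.single j 1 : Fin n → ℝ)) =
      fderiv ℝ F y (c • (Pi.single j 1 : Fin n → ℝ))
    rw [map_smul, map_smul]
    congr 1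
    funext i
    exact aux_int_const _ ((continuous_apply i).comp (hcontD.clm_apply continuous_const))
      (hentry i j) x y
  -- pick a base point in some interior
  obtain ⟨x₀, hx₀U⟩ := hUdense.nonempty
  obtain ⟨p₀, hx₀⟩ := Set.mem_iUnion.mp hx₀U
  refine ⟨(p₀.1 : Matrix.SpecialLinearGroup (Fin n) ℤ), p₀.1.2, p₀.2, ?_⟩
  intro x
  have hdiffF : Differentiable ℝ (F : (Fin n → ℝ) → (Fin n → ℝ)) := hF.differentiable one_ne_zero
  set M₀ : Matrix (Fin n) (Fin n) ℤ :=
    ((p₀.1 : Matrix.SpecialLinearGroup (Fin n) ℤ) : Matrix (Fin n) (Fin n) ℤ)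
  have hG : Differentiable ℝ (fun y => (F : (Fin n → ℝ) → (Fin n → ℝ)) y - intMatCLM M₀ y) :=
    hdiffF.sub (intMatCLM M₀).differentiable
  have hG0 : ∀ y, fderiv ℝ
      (fun y => (F : (Fin n → ℝ) → (Fin n → ℝ)) y - intMatCLM M₀ y) y = 0 := by
    intro y
    rw [fderiv_fun_sub (hdiffF y) (intMatCLM M₀).differentiableAt, (intMatCLM M₀).fderiv,
      hDconst y x₀, hDint p₀ x₀ hx₀, sub_self]
  have hconst := is_const_of_fderiv_eq_zero hG hG0 x x₀
  have hFx₀ : F x₀ = intMatAct M₀ x₀ + fun i => ((p₀.2 i : ℝ)) :=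
    (interior_subset hx₀ : x₀ ∈ S p₀)
  show F x = intMatAct M₀ x + fun i => ((p₀.2 i : ℝ))
  have key : F x - intMatCLM M₀ x = F x₀ - intMatCLM M₀ x₀ := hconst
  rw [intMatCLM_apply, intMatCLM_apply, hFx₀] at key
  have : F x = intMatAct M₀ x + (intMatAct M₀ x₀ + (fun i => ((p₀.2 i : ℝ))) - intMatAct M₀ x₀) := by
    rw [← key]; abel
  rw [this]; congr 1; abel
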